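/- Let A be a unitary operator on a complex Hilbert space H, let x ∈ H, and let C > 0. Then the sequence (A^k x)_{k∈ℕ} is a Bessel sequence in H with bound C if and only if the two-sided family (A^k x)_{k∈ℤ} (where A^k for negative k means (A⁻¹)^{−k}) is a Bessel sequence in H with bound C. -/

import Mathlib

open MeasureTheory ContinuousLinearMap

/-- `y` is a Bessel sequence with Bessel bound `C`:
`∑_j |⟨v, y_j⟩|² ≤ C‖v‖²` for all `v` (stated via finite partial sums). -/
def IsBesselSequenceWith {H : Type*} [NormedAddCommGroup H] [InnerProductSpace ℂ H]
    {ι : Type*} (y : ι → H) (C : ℝ) : Prop :=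
  ∀ v : H, ∀ F : Finset ι, ∑ j ∈ F, ‖(inner ℂ v (y j) : ℂ)‖ ^ 2 ≤ C * ‖v‖ ^ 2

private lemma pow_mul_pow_eq_one' {M : Type*} [Monoid M] {b a : M} (h : b * a = 1) :
    ∀ n : ℕ, b ^ n * a ^ n = 1
  | 0 => by simp
  | n + 1 => by
    rw [pow_succ, pow_succ', mul_assoc, ← mul_assoc b, h, one_mul,
      pow_mul_pow_eq_one' h n]

section Aux

variable {H : Type*} [NormedAddCommGroup H] [InnerProductSpace ℂ H] [CompleteSpace H]
  (A : H →L[ℂ] H) (hA₂ : ContinuousLinearMap.adjoint A ∘L A = 1)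

local notation "⟪" x ", " y "⟫" => @inner ℂ _ _ x y

include hA₂

private lemma adj_pow_cancel (n : ℕ) :
    (ContinuousLinearMap.adjoint A) ^ n * A ^ n = 1 :=
  pow_mul_pow_eq_one' hA₂ n

private lemma norm_pow_apply (n : ℕ) (v : H) : ‖(A ^ n) v‖ = ‖v‖ := by
  have h1 : ⟪(A ^ n) v, (A ^ n) v⟫ = ⟪v, v⟫ := by
    rw [← adjoint_inner_right]
    have : (ContinuousLinearMap.adjoint (A ^ n)) ((A ^ n) v) = v := by
      rw [← ContinuousLinearMap.star_eq_adjoint, star_pow,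
        ContinuousLinearMap.star_eq_adjoint, ← ContinuousLinearMap.mul_apply,
        adj_pow_cancel A hA₂ n, ContinuousLinearMap.one_apply]
    rw [this]
  have h2 : RCLike.re (⟪(A ^ n) v, (A ^ n) v⟫ : ℂ) = RCLike.re (⟪v, v⟫ : ℂ) := by
    rw [h1]
  rw [inner_self_eq_norm_sq, inner_self_eq_norm_sq] at h2
  nlinarith [norm_nonneg ((A ^ n) v), norm_nonneg v]

private lemma key_inner (v x : H) (k : ℤ) (N : ℕ) (hk : 0 ≤ k + N) :
    ⟪(A ^ N) v, (A ^ (k + N).toNat) x⟫ =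
      ⟪v, if 0 ≤ k then (A ^ k.toNat) x
        else ((ContinuousLinearMap.adjoint A) ^ (-k).toNat) x⟫ := by
  rw [← adjoint_inner_right, ← ContinuousLinearMap.star_eq_adjoint, star_pow,
    ContinuousLinearMap.star_eq_adjoint, ← ContinuousLinearMap.mul_apply]
  congr 1
  by_cases h : 0 ≤ k
  · simp only [h, if_true]
    have hm : (k + N).toNat = N + k.toNat := by omega
    rw [hm, pow_add, ← mul_assoc, adj_pow_cancel A hA₂ N, one_mul]
  · simp only [h, if_false]
    have hop : (ContinuousLinearMap.adjoint A) ^ N =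
        (ContinuousLinearMap.adjoint A) ^ (-k).toNat *
          (ContinuousLinearMap.adjoint A) ^ (k + (N : ℤ)).toNat := by
      rw [← pow_add]; congr 1; omega
    rw [hop, mul_assoc, adj_pow_cancel A hA₂, mul_one]

end Aux

theorem stmt_3 {H : Type*} [NormedAddCommGroup H] [InnerProductSpace ℂ H] [CompleteSpace H]
    (A : H →L[ℂ] H)
    (hA₁ : A ∘L ContinuousLinearMap.adjoint A = 1)
    (hA₂ : ContinuousLinearMap.adjoint A ∘L A = 1)
    (x : H) (C : ℝ) (hC : 0 < C) :
    IsBesselSequenceWith (fun k : ℕ => (A ^ k) x) C ↔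
      IsBesselSequenceWith
        (fun k : ℤ => if 0 ≤ k then (A ^ k.toNat) x
          else ((ContinuousLinearMap.adjoint A) ^ (-k).toNat) x) C := by
  constructor
  · intro h v F
    -- choose N shifting F into ℕ
    set N : ℕ := F.sup fun k => (-k).toNat with hNdef
    have hkN : ∀ k ∈ F, 0 ≤ k + N := by
      intro k hk
      have : (-k).toNat ≤ N := Finset.le_sup (f := fun k => (-k).toNat) hk
      omega
    set f : ℤ → ℕ := fun k => (k + N).toNat with hf
    have hinj : ∀ k ∈ F, ∀ l ∈ F, f k = f l → k = l := by
      intro k hk l hl hkl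
      have h1 := hkN k hk
      have h2 := hkN l hl
      simp only [hf] at hkl
      omega
    have hsum : ∑ j ∈ F.image f, ‖(inner ℂ ((A ^ N) v) ((A ^ j) x) : ℂ)‖ ^ 2
        = ∑ k ∈ F, ‖(inner ℂ ((A ^ N) v) ((A ^ (f k)) x) : ℂ)‖ ^ 2 :=
      Finset.sum_image hinj
    have hterm : ∀ k ∈ F, ‖(inner ℂ ((A ^ N) v) ((A ^ (f k)) x) : ℂ)‖ ^ 2
        = ‖(inner ℂ v (if 0 ≤ k then (A ^ k.toNat) x
            else ((ContinuousLinearMap.adjoint A) ^ (-k).toNat) x) : ℂ)‖ ^ 2 := by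
      intro k hk
      rw [key_inner A hA₂ v x k N (hkN k hk)]
    calc ∑ k ∈ F, ‖(inner ℂ v (if 0 ≤ k then (A ^ k.toNat) x
            else ((ContinuousLinearMap.adjoint A) ^ (-k).toNat) x) : ℂ)‖ ^ 2
        = ∑ k ∈ F, ‖(inner ℂ ((A ^ N) v) ((A ^ (f k)) x) : ℂ)‖ ^ 2 :=
          Finset.sum_congr rfl fun k hk => (hterm k hk).symm
      _ = ∑ j ∈ F.image f, ‖(inner ℂ ((A ^ N) v) ((A ^ j) x) : ℂ)‖ ^ 2 := hsum.symm
      _ ≤ C * ‖(A ^ N) v‖ ^ 2 := h ((A ^ N) v) (F.image f)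
      _ = C * ‖v‖ ^ 2 := by rw [norm_pow_apply A hA₂ N v]
  · intro h v F
    have hinj : ∀ k ∈ F, ∀ l ∈ F, (k : ℤ) = (l : ℤ) → k = l := by
      intro k _ l _ hkl; exact_mod_cast hkl
    have hsum : ∑ j ∈ F.image (fun n : ℕ => (n : ℤ)),
        ‖(inner ℂ v (if 0 ≤ j then (A ^ j.toNat) x
          else ((ContinuousLinearMap.adjoint A) ^ (-j).toNat) x) : ℂ)‖ ^ 2
        = ∑ k ∈ F, ‖(inner ℂ v (if 0 ≤ (k : ℤ) then (A ^ ((k : ℤ)).toNat) x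
          else ((ContinuousLinearMap.adjoint A) ^ (-(k : ℤ)).toNat) x) : ℂ)‖ ^ 2 :=
      Finset.sum_image hinj
    have := h v (F.image (fun n : ℕ => (n : ℤ)))
    rw [hsum] at this
    simpa using this
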